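/- Under the packed-field comparison setup, let H be the word whose i-th field is h_i·2^{f-1} with h_i ∈ {0,1} (only test bits possibly set). Then the word M = H - (H >> (f-1)) (i.e., M = ∑_i h_i·2^{f-1}·2^{fi} - ∑_i h_i·2^{fi}) has i-th field equal to 2^{f-1} - 1 (all f-1 low bits set, test bit 0) when h_i = 1 and equal to 0 when h_i = 0. -/

import Mathlib

lemma aux_sum_lt (b : ℕ) (c : ℕ → ℕ) (hc : ∀ j, c j < b) :
    ∀ i, (∑ j ∈ Finset.range i, c j * b ^ j) < b ^ i := by
  intro i
  induction i with
  | zero => simp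
  | succ n ih =>
      rw [Finset.sum_range_succ]
      have h1 : (∑ j ∈ Finset.range n, c j * b ^ j) + c n * b ^ n
          < b ^ n + c n * b ^ n := by omega
      have h2 : b ^ n + c n * b ^ n = (c n + 1) * b ^ n := by ring
      have h3 : (c n + 1) * b ^ n ≤ b * b ^ n :=
        Nat.mul_le_mul_right _ (hc n)
      calc (∑ j ∈ Finset.range n, c j * b ^ j) + c n * b ^ n
          < b ^ n + c n * b ^ n := h1
        _ = (c n + 1) * b ^ n := h2
        _ ≤ b * b ^ n := h3
        _ = b ^ (n + 1) := (pow_succ' b n).symm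

lemma aux_digit (b : ℕ) (hb : 1 < b) (c : ℕ → ℕ) (hc : ∀ j, c j < b)
    (k i : ℕ) (hik : i < k) :
    (∑ j ∈ Finset.range k, c j * b ^ j) / b ^ i % b = c i := by
  have hsplit : (∑ j ∈ Finset.range i, c j * b ^ j)
      + (∑ j ∈ Finset.Ico i k, c j * b ^ j)
      = ∑ j ∈ Finset.range k, c j * b ^ j :=
    Finset.sum_range_add_sum_Ico _ (le_of_lt hik)
  have hico : (∑ j ∈ Finset.Ico i k, c j * b ^ j)
      = b ^ i * ∑ j ∈ Finset.range (k - i), c (i + j) * b ^ j := by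
    rw [Finset.sum_Ico_eq_sum_range, Finset.mul_sum]
    apply Finset.sum_congr rfl
    intro j _
    rw [pow_add]
    ring
  set T := ∑ j ∈ Finset.range (k - i), c (i + j) * b ^ j with hT
  have hS : (∑ j ∈ Finset.range k, c j * b ^ j)
      = (∑ j ∈ Finset.range i, c j * b ^ j) + b ^ i * T := by
    rw [← hsplit, hico]
  have hlow : (∑ j ∈ Finset.range i, c j * b ^ j) < b ^ i :=
    aux_sum_lt b c hc i
  have hdiv : (∑ j ∈ Finset.range k, c j * b ^ j) / b ^ i = T := by
    rw [hS, mul_comm, Nat.add_mul_div_right _ _ (pow_pos (by omega : 0 < b) i),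
      Nat.div_eq_of_lt hlow, zero_add]
  rw [hdiv]
  -- T % b = c i
  obtain ⟨n, hn⟩ : ∃ n, k - i = n + 1 := ⟨k - i - 1, by omega⟩
  rw [hT, hn, Finset.sum_range_succ']
  simp only [pow_zero, mul_one, add_zero]
  have : (∑ j ∈ Finset.range n, c (i + (j + 1)) * b ^ (j + 1))
      = b * ∑ j ∈ Finset.range n, c (i + (j + 1)) * b ^ j := by
    rw [Finset.mul_sum]
    apply Finset.sum_congr rfl
    intro j _
    ring
  rw [this, add_comm, Nat.add_mul_mod_self_left, Nat.mod_eq_of_lt (hc i)]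

/-- Fieldwise mask construction from test bits: `M = H - (H >> (f-1))` has field `i`
    equal to `2^(f-1) - 1` when `h i = 1` and to `0` when `h i = 0`. -/
theorem fieldwise_mask (f k : ℕ) (hf : 1 ≤ f) (h : ℕ → ℕ) (hh : ∀ i, h i ≤ 1)
    (H M : ℕ)
    (hH : H = ∑ i ∈ Finset.range k, h i * 2 ^ (f - 1) * 2 ^ (f * i))
    (hM : M = H - ∑ i ∈ Finset.range k, h i * 2 ^ (f * i)) :
    ∀ i, i < k → M / 2 ^ (f * i) % 2 ^ f = h i * (2 ^ (f - 1) - 1) := by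
  have hle : ∀ j, h j * 2 ^ (f * j) ≤ h j * 2 ^ (f - 1) * 2 ^ (f * j) := by
    intro j
    have h1 : h j ≤ h j * 2 ^ (f - 1) :=
      Nat.le_mul_of_pos_right _ (pow_pos (by omega : 0 < 2) _)
    exact Nat.mul_le_mul_right _ h1
  have hMsum : M = ∑ j ∈ Finset.range k,
      (h j * (2 ^ (f - 1) - 1)) * (2 ^ f) ^ j := by
    rw [hM, hH, ← Finset.sum_tsub_distrib _ (fun j _ => hle j)]
    apply Finset.sum_congr rfl
    intro j _
    have h1 : 1 ≤ 2 ^ (f - 1) := Nat.one_le_two_pow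
    rw [← pow_mul]
    have : h j * 2 ^ (f - 1) * 2 ^ (f * j) - h j * 2 ^ (f * j)
        = (h j * 2 ^ (f - 1) - h j) * 2 ^ (f * j) := by
      rw [Nat.sub_mul]
    rw [this, Nat.mul_sub, Nat.mul_one]
  have hc : ∀ j, h j * (2 ^ (f - 1) - 1) < 2 ^ f := by
    intro j
    have h1 : 1 ≤ 2 ^ (f - 1) := Nat.one_le_two_pow
    have h2 : 2 ^ (f - 1) < 2 ^ f := Nat.pow_lt_pow_right (by norm_num) (by omega)
    have h3 := Nat.mul_le_mul_right (2 ^ (f - 1) - 1) (hh j)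
    omega
  intro i hik
  have := aux_digit (2 ^ f) (Nat.one_lt_two_pow (by omega)) _ hc k i hik
  rw [← pow_mul] at this
  rw [hMsum]
  exact this
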